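/- arXiv:1107.1904 — 2 statements merged into one kernel-verified Lean document; each statement's English description precedes it below -/
import Mathlib

section
/- Let d ≥ 1, r ≥ 2, N = (d+1)(r-1), and N' = (d+2)(r-1) = N + r - 1. Suppose the colored Tverberg property holds for parameter (d+1, r) and manifold M × [0,1]: i.e., for the specific map f' : Δ_{N'} → M × [0,1] defined from f by sending the point with barycentric coordinates (λ_0,…,λ_{N'}) to (f(λ_0 v_0 + ⋯ + λ_{N-1} v_{N-1} + (λ_N + ⋯ + λ_{N'}) v_N), λ_{N+1} + ⋯ + λ_{N'}), any r disjoint rainbow faces F'_1, …, F'_r of Δ_{N'} with intersecting images under f' yield, by setting F_i = F'_i ∩ Δ_N, r disjoint rainbow faces of Δ_N whose images under f intersect. In particular, the common intersection point of the f'(F'_i) lies in M × {0}, and each F_i is nonempty. -/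
open scoped BigOperators
open Classical

/-- The geometric face of the standard simplex spanned by a set `F` of vertices. -/
def geomFace {n : ℕ} (F : Finset (Fin n)) : Set (stdSimplex ℝ (Fin n)) :=
  {x | ∀ v : Fin n, (x : Fin n → ℝ) v ≠ 0 → v ∈ F}

lemma collapse_mem {N r : ℕ} (hr : 1 ≤ r) (x : stdSimplex ℝ (Fin (N+r))) :
    (fun v : Fin (N+1) => if h : (v:ℕ) < N then (x : Fin (N+r) → ℝ) ⟨v, by omega⟩
      else ∑ j ∈ Finset.univ.filter (fun j : Fin (N+r) => N ≤ (j:ℕ)), (x : Fin (N+r) → ℝ) j)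
      ∈ stdSimplex ℝ (Fin (N+1)) := by
  constructor
  · intro v
    dsimp only
    split
    · exact x.2.1 _
    · exact Finset.sum_nonneg fun j _ => x.2.1 j
  · have hsplit : Finset.univ.filter (fun v : Fin (N+1) => ¬ (v:ℕ) < N) = {Fin.last N} := by
      ext v
      simp only [Finset.mem_filter, Finset.mem_univ, true_and, Finset.mem_singleton,
        Fin.ext_iff, Fin.val_last]
      omega
    rw [← Finset.sum_filter_add_sum_filter_not Finset.univ (fun v : Fin (N+1) => (v:ℕ) < N)]
    have h1 : ∑ v ∈ Finset.univ.filter (fun v : Fin (N+1) => (v:ℕ) < N),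
        (if h : (v:ℕ) < N then (x : Fin (N+r) → ℝ) ⟨v, by omega⟩
          else ∑ j ∈ Finset.univ.filter (fun j : Fin (N+r) => N ≤ (j:ℕ)), (x : Fin (N+r) → ℝ) j)
        = ∑ j ∈ Finset.univ.filter (fun j : Fin (N+r) => (j:ℕ) < N), (x : Fin (N+r) → ℝ) j := by
      apply Finset.sum_nbij' (fun v : Fin (N+1) => (⟨min v N, by omega⟩ : Fin (N+r)))
        (fun j : Fin (N+r) => (⟨min j N, by omega⟩ : Fin (N+1)))
      · intro a ha
        simp only [Finset.mem_filter, Finset.mem_univ, true_and] at ha ⊢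
        omega
      · intro a ha
        simp only [Finset.mem_filter, Finset.mem_univ, true_and] at ha ⊢
        omega
      · intro a ha
        simp only [Finset.mem_filter, Finset.mem_univ, true_and] at ha
        apply Fin.ext; simp; omega
      · intro a ha
        simp only [Finset.mem_filter, Finset.mem_univ, true_and] at ha
        apply Fin.ext; simp; omega
      · intro a ha
        simp only [Finset.mem_filter, Finset.mem_univ, true_and] at ha
        rw [dif_pos ha]
        exact congrArg _ (Fin.ext (show (↑a:ℕ) = ↑a ⊓ N by omega))
    rw [h1, hsplit, Finset.sum_singleton,
      dif_neg (by simp : ¬ ((Fin.last N : Fin (N+1)) : ℕ) < N)]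
    have h2 : Finset.univ.filter (fun j : Fin (N+r) => N ≤ (j:ℕ))
        = Finset.univ.filter (fun j : Fin (N+r) => ¬ (j:ℕ) < N) := by
      apply Finset.filter_congr; intro j _; simp
    rw [h2, Finset.sum_filter_add_sum_filter_not]
    exact x.2.2

/-- **The geometric reduction lemma.** Let `d ≥ 1`, `r ≥ 2`, `N = (d+1)(r-1)` and
`N' = N + r - 1 = (d+2)(r-1)` (so `Δ_{N'}` has vertex set `Fin (N+r)`), and regard `Δ_N`
as the front face of `Δ_{N'}`. Color the `r-1` new vertices with one new color (`none`),
and let `f' : Δ_{N'} → M × [0,1]` be defined from `f : Δ_N → M` by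
`(λ_0,…,λ_{N'}) ↦ (f(λ_0 v_0 + ⋯ + λ_{N-1}v_{N-1} + (λ_N + ⋯ + λ_{N'})v_N), λ_{N+1}+⋯+λ_{N'})`.
Then any `r` disjoint rainbow faces `F'_1,…,F'_r` of `Δ_{N'}` whose images under `f'` have a
common point `p` yield, via `F_i := F'_i ∩ Δ_N`, `r` nonempty disjoint rainbow faces of `Δ_N`
whose images under `f` have a common point; moreover `p ∈ M × {0}`. -/
theorem colored_Tverberg_reduction
    (d r : ℕ) (hd : 1 ≤ d) (hr : 2 ≤ r)
    (N : ℕ) (hN : N = (d + 1) * (r - 1))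
    (M : Type*) [TopologicalSpace M]
    (ι : Type) (color : Fin (N+1) → ι)
    (hcolor : ∀ c : ι, (Finset.univ.filter (fun v => color v = c)).card ≤ r - 1)
    (f : C(stdSimplex ℝ (Fin (N+1)), M))
    -- the new coloring of `Δ_{N'}`: old colors on the front face, one new color `none`
    (color' : Fin (N+r) → Option ι)
    (hcolor' : ∀ v : Fin (N+r), color' v =
      if h : (v : ℕ) < N + 1 then some (color ⟨v, h⟩) else none)
    -- the map `f' : Δ_{N'} → M × [0,1] ⊆ M × ℝ`
    (f' : C(stdSimplex ℝ (Fin (N+r)), M × ℝ))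
    (hf'range : ∀ x, (f' x).2 ∈ Set.Icc (0:ℝ) 1)
    (hf' : ∀ (x : stdSimplex ℝ (Fin (N+r))) (y : stdSimplex ℝ (Fin (N+1))),
      (∀ i : ℕ, (hi : i < N) →
        (y : Fin (N+1) → ℝ) ⟨i, by omega⟩ = (x : Fin (N+r) → ℝ) ⟨i, by omega⟩) →
      ((y : Fin (N+1) → ℝ) ⟨N, by omega⟩ =
        ∑ j ∈ Finset.univ.filter (fun j : Fin (N+r) => N ≤ (j : ℕ)), (x : Fin (N+r) → ℝ) j) →
      f' x = (f y,
        ∑ j ∈ Finset.univ.filter (fun j : Fin (N+r) => N + 1 ≤ (j : ℕ)), (x : Fin (N+r) → ℝ) j))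
    -- a colored Tverberg partition for `f'`
    (F' : Fin r → Finset (Fin (N+r)))
    (hdisj' : Pairwise fun i j => Disjoint (F' i) (F' j))
    (hrainbow' : ∀ i, Set.InjOn color' (F' i : Set (Fin (N+r))))
    (p : M × ℝ)
    (hp : ∀ i, p ∈ f' '' geomFace (F' i)) :
    -- conclusion: `p` lies in `M × {0}`, and the restricted faces `F_i = F'_i ∩ Δ_N`
    -- form a colored Tverberg partition for `f`
    p.2 = 0 ∧
    ∀ F : Fin r → Finset (Fin (N+1)),
      (∀ i, F i = Finset.univ.filter
        (fun v : Fin (N+1) => Fin.castLE (by omega) v ∈ F' i)) →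
      (∀ i, (F i).Nonempty) ∧
      (Pairwise fun i j => Disjoint (F i) (F j)) ∧
      (∀ i, Set.InjOn color (F i : Set (Fin (N+1)))) ∧
      p.1 ∈ ⋂ i, f '' geomFace (F i) := by
  have hr1 : (1:ℕ) ≤ r := by omega
  choose x hxmem hxeq using hp
  have hxmem' : ∀ i (j : Fin (N+r)), (x i : Fin (N+r) → ℝ) j ≠ 0 → j ∈ F' i := by
    intro i j hj
    exact hxmem i j hj
  set y : Fin r → stdSimplex ℝ (Fin (N+1)) := fun i =>
    ⟨_, collapse_mem hr1 (x i)⟩ with hy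
  have hkey : ∀ i, p = (f (y i),
      ∑ j ∈ Finset.univ.filter (fun j : Fin (N+r) => N + 1 ≤ (j:ℕ)),
        (x i : Fin (N+r) → ℝ) j) := by
    intro i
    rw [← hxeq i]
    apply hf' (x i) (y i)
    · intro k hk
      exact dif_pos hk
    · exact dif_neg (lt_irrefl N)
  -- some face contains no new vertex
  have hex : ∃ i0 : Fin r, ∀ j ∈ F' i0, (j:ℕ) < N + 1 := by
    by_contra hno
    push_neg at hno
    choose g hg1 hg2 using hno
    have hginj : Function.Injective g := by
      intro a b hab
      by_contra hab'
      exact (Finset.disjoint_left.mp (hdisj' hab') (hg1 a)) (hab ▸ hg1 b)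
    have hinj2 : Function.Injective
        (fun i => (⟨(g i : ℕ) - (N+1), by have := (g i).isLt; have := hg2 i; omega⟩ :
          Fin (r-1))) := by
      intro a b hab
      apply hginj
      apply Fin.ext
      have ha := hg2 a
      have hb := hg2 b
      simp only [Fin.mk.injEq] at hab
      omega
    have hcard := Fintype.card_le_of_injective _ hinj2
    simp only [Fintype.card_fin] at hcard
    omega
  obtain ⟨i0, hi0⟩ := hex
  have hp2 : p.2 = 0 := by
    have h := congrArg Prod.snd (hkey i0)
    rw [h]
    dsimp only
    apply Finset.sum_eq_zero
    intro j hj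
    simp only [Finset.mem_filter, Finset.mem_univ, true_and] at hj
    by_contra hne
    have := hi0 j (hxmem' i0 j hne)
    omega
  have hxzero : ∀ i (j : Fin (N+r)), N + 1 ≤ (j:ℕ) → (x i : Fin (N+r) → ℝ) j = 0 := by
    intro i j hj
    have h0 : ∑ j ∈ Finset.univ.filter (fun j : Fin (N+r) => N + 1 ≤ (j:ℕ)),
        (x i : Fin (N+r) → ℝ) j = 0 := by
      have h := congrArg Prod.snd (hkey i)
      rw [hp2] at h
      exact h.symm
    have hall := (Finset.sum_eq_zero_iff_of_nonneg
      (fun j _ => (x i).2.1 j)).mp h0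
    exact hall j (Finset.mem_filter.mpr ⟨Finset.mem_univ _, hj⟩)
  refine ⟨hp2, ?_⟩
  intro F hF
  have hyface : ∀ i, y i ∈ geomFace (F i) := by
    intro i v hv
    rw [hF i, Finset.mem_filter]
    refine ⟨Finset.mem_univ _, ?_⟩
    have hcast : (Fin.castLE (by omega : N + 1 ≤ N + r) v : Fin (N+r))
        = ⟨(v:ℕ), by omega⟩ := Fin.ext rfl
    by_cases hvN : (v:ℕ) < N
    · have hx0 : (x i : Fin (N+r) → ℝ) ⟨(v:ℕ), by omega⟩ ≠ 0 := by
        intro h0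
        exact hv (by rw [show ((y i : Fin (N+1) → ℝ)) v =
          (x i : Fin (N+r) → ℝ) ⟨(v:ℕ), by omega⟩ from dif_pos hvN, h0])
      rw [hcast]
      exact hxmem' i _ hx0
    · have hvN' : (v:ℕ) = N := by have := v.isLt; omega
      have hsum : (y i : Fin (N+1) → ℝ) v =
          ∑ j ∈ Finset.univ.filter (fun j : Fin (N+r) => N ≤ (j:ℕ)),
            (x i : Fin (N+r) → ℝ) j := dif_neg hvN
      obtain ⟨j, hjmem, hjne⟩ :
          ∃ j ∈ Finset.univ.filter (fun j : Fin (N+r) => N ≤ (j:ℕ)),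
            (x i : Fin (N+r) → ℝ) j ≠ 0 := by
        by_contra hcon
        push_neg at hcon
        exact hv (by rw [hsum]; exact Finset.sum_eq_zero hcon)
      simp only [Finset.mem_filter, Finset.mem_univ, true_and] at hjmem
      have hjlt : (j:ℕ) < N + 1 := by
        by_contra hjge
        exact hjne (hxzero i j (by omega))
      have hjN : (j:ℕ) = N := by omega
      have hjF : j ∈ F' i := hxmem' i j hjne
      have : Fin.castLE (by omega : N + 1 ≤ N + r) v = j := by
        apply Fin.ext
        simp [hvN', hjN]
      rw [this]
      exact hjF
  have hne : ∀ i, (F i).Nonempty := by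
    intro i
    obtain ⟨v, hv⟩ : ∃ v, (y i : Fin (N+1) → ℝ) v ≠ 0 := by
      by_contra h
      push_neg at h
      have h1 : ∑ v, (y i : Fin (N+1) → ℝ) v = 1 := (y i).2.2
      rw [Finset.sum_eq_zero (fun v _ => h v)] at h1
      norm_num at h1
    exact ⟨v, hyface i v hv⟩
  have hdisj : Pairwise fun i j => Disjoint (F i) (F j) := by
    intro a b hab
    rw [Finset.disjoint_left]
    intro v hva hvb
    rw [hF a, Finset.mem_filter] at hva
    rw [hF b, Finset.mem_filter] at hvb
    exact Finset.disjoint_left.mp (hdisj' hab) hva.2 hvb.2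
  have hrain : ∀ i, Set.InjOn color (F i : Set (Fin (N+1))) := by
    intro i v hv w hw hvw
    have hv' : Fin.castLE (by omega : N + 1 ≤ N + r) v ∈ F' i := by
      rw [hF i] at hv
      simpa using hv
    have hw' : Fin.castLE (by omega : N + 1 ≤ N + r) w ∈ F' i := by
      rw [hF i] at hw
      simpa using hw
    have h1 : color' (Fin.castLE (by omega : N + 1 ≤ N + r) v) = some (color v) := by
      rw [hcolor']
      exact dif_pos v.isLt
    have h2 : color' (Fin.castLE (by omega : N + 1 ≤ N + r) w) = some (color w) := by
      rw [hcolor']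
      exact dif_pos w.isLt
    have heq : Fin.castLE (by omega : N + 1 ≤ N + r) v
        = Fin.castLE (by omega : N + 1 ≤ N + r) w := by
      apply hrainbow' i hv' hw'
      rw [h1, h2, hvw]
    have heq' : ((Fin.castLE (by omega : N + 1 ≤ N + r) v : Fin (N+r)) : ℕ)
        = ((Fin.castLE (by omega : N + 1 ≤ N + r) w : Fin (N+r)) : ℕ) :=
      congrArg Fin.val heq
    simp only [Fin.coe_castLE] at heq'
    exact Fin.ext heq'
  refine ⟨hne, hdisj, hrain, ?_⟩
  rw [Set.mem_iInter]
  intro i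
  exact ⟨y i, hyface i, (congrArg Prod.fst (hkey i)).symm⟩
end

section
/- For every r ≥ 2 and d ≥ 1, there exist N+1 = (d+1)(r-1)+1 points in ℝ^d together with a coloring in which one color class has size exactly r and all other color classes are singletons, such that there is no partition of the points into r rainbow subsets whose convex hulls have a common point. -/
open scoped BigOperators
open Classical

private lemma hullLe {d : ℕ} {φ : EuclideanSpace ℝ (Fin d) → ℝ} (hφ : IsLinearMap ℝ φ)
    {s : Set (EuclideanSpace ℝ (Fin d))} {c : ℝ} (h : ∀ x ∈ s, φ x ≤ c) {y}
    (hy : y ∈ convexHull ℝ s) : φ y ≤ c :=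
  convexHull_min h (convex_halfSpace_le hφ c) hy

private lemma hullGe {d : ℕ} {φ : EuclideanSpace ℝ (Fin d) → ℝ} (hφ : IsLinearMap ℝ φ)
    {s : Set (EuclideanSpace ℝ (Fin d))} {c : ℝ} (h : ∀ x ∈ s, c ≤ φ x) {y}
    (hy : y ∈ convexHull ℝ s) : c ≤ φ y :=
  convexHull_min h (convex_halfSpace_ge hφ c) hy

private lemma linCoord {d : ℕ} (j : Fin d) :
    IsLinearMap ℝ (fun x : EuclideanSpace ℝ (Fin d) => x j) :=
  ⟨fun _ _ => rfl, fun _ _ => rfl⟩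

private lemma linSum {d : ℕ} : IsLinearMap ℝ (fun x : EuclideanSpace ℝ (Fin d) => ∑ k, x k) := by
  constructor
  · intro x z
    show (∑ k, (x k + z k)) = _
    exact Finset.sum_add_distrib
  · intro t x
    show (∑ k, t * x k) = t • (∑ k, x k)
    rw [← Finset.mul_sum, smul_eq_mul]

private lemma linSub {d : ℕ} (j : Fin d) (t : ℝ) :
    IsLinearMap ℝ (fun x : EuclideanSpace ℝ (Fin d) => (∑ k, x k) - t * x j) := by
  constructor
  · intro x z
    show (∑ k, (x k + z k)) - t * (x j + z j) = _
    rw [Finset.sum_add_distrib]; ring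
  · intro c x
    show (∑ k, c * x k) - t * (c * x j) = c • ((∑ k, x k) - t * x j)
    rw [← Finset.mul_sum, smul_eq_mul]; ring

private lemma linBad {d : ℕ} (S : Finset (Fin d)) (c₁ c₂ : ℝ) :
    IsLinearMap ℝ (fun x : EuclideanSpace ℝ (Fin d) =>
      c₁ * (∑ j ∈ S, x j) - c₂ * (∑ k, x k)) := by
  constructor
  · intro x z
    show c₁ * (∑ j ∈ S, (x j + z j)) - c₂ * (∑ k, (x k + z k)) = _
    rw [Finset.sum_add_distrib, Finset.sum_add_distrib]; ring
  · intro c x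
    show c₁ * (∑ j ∈ S, c * x j) - c₂ * (∑ k, c * x k) = c • _
    rw [← Finset.mul_sum, ← Finset.mul_sum, smul_eq_mul]; ring

private lemma sum_ite_val {d : ℕ} (S : Finset (Fin d)) (m : ℕ) (hm : m < d) :
    ∑ j ∈ S, (if (j : ℕ) = m then (1:ℝ) else 0) = if ⟨m, hm⟩ ∈ S then 1 else 0 := by
  have h : ∀ j : Fin d, ((j : ℕ) = m) ↔ (j = ⟨m, hm⟩) := by
    intro j; constructor
    · exact fun h => Fin.ext h
    · intro h; rw [h]
  simp_rw [h]
  exact Finset.sum_ite_eq' S ⟨m, hm⟩ (fun _ => (1:ℝ))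

/-- The point configuration witnessing sharpness: index `0` goes to `(2,…,2)`,
indices `1,…,r-1` go to `(-2,…,-2)`, and index `v ≥ r` goes to the standard basis
vector `e_{min ((v-r)/(r-1)) (d-1)}` (so each basis vector is used at most `r-1` times). -/
noncomputable def qpt (d r : ℕ) (v : ℕ) : EuclideanSpace ℝ (Fin d) :=
  if v = 0 then WithLp.toLp 2 (fun _ => 2)
  else if v < r then WithLp.toLp 2 (fun _ => -2)
  else WithLp.toLp 2 (fun k => if (k : ℕ) = min ((v - r) / (r - 1)) (d - 1) then 1 else 0)

/-- **Tightness of the color class bound.** For every `r ≥ 2` and `d ≥ 1` there are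
`N+1 = (d+1)(r-1)+1` points in `ℝ^d` and a coloring with one color class of size exactly `r`
and all other classes singletons, admitting no colored Tverberg partition: there is no
partition of the points into `r` pairwise disjoint rainbow subsets whose convex hulls have
a common point. -/
theorem colored_Tverberg_sharp_color_bound
    (d r : ℕ) (hd : 1 ≤ d) (hr : 2 ≤ r)
    (N : ℕ) (hN : N = (d + 1) * (r - 1)) :
    ∃ (p : Fin (N+1) → EuclideanSpace ℝ (Fin d)) (ι : Type) (color : Fin (N+1) → ι) (c₀ : ι),
      (Finset.univ.filter (fun v => color v = c₀)).card = r ∧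
      (∀ c : ι, c ≠ c₀ → (Finset.univ.filter (fun v => color v = c)).card = 1) ∧
      ¬ ∃ F : Fin r → Finset (Fin (N+1)),
          (Pairwise fun i j => Disjoint (F i) (F j)) ∧
          (Finset.univ.biUnion F = Finset.univ) ∧
          (∀ i, Set.InjOn color (F i : Set (Fin (N+1)))) ∧
          (⋂ i, convexHull ℝ (p '' (F i : Set (Fin (N+1))))).Nonempty := by
  have hd0 : 0 < d := hd
  have hr1 : 0 < r - 1 := by omega
  have hrN : r ≤ N := by
    have h2 : 2 * (r - 1) ≤ (d + 1) * (r - 1) := Nat.mul_le_mul_right _ (by omega)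
    omega
  refine ⟨fun v => qpt d r v.val, Option {v : Fin (N+1) // r ≤ (v : ℕ)},
    fun v => if h : r ≤ (v : ℕ) then some ⟨v, h⟩ else none, none, ?_, ?_, ?_⟩
  · -- the class of color `none` has exactly `r` elements
    rw [Finset.filter_congr_decidable]
    refine Finset.card_eq_of_bijective (fun i hi => (⟨i, by omega⟩ : Fin (N+1))) ?_ ?_ ?_
    · intro a ha
      rw [Finset.mem_filter] at ha
      have hP := ha.2
      have hlt : (a : ℕ) < r := by
        by_contra hc
        push_neg at hc
        simp [hc] at hP
      exact ⟨(a : ℕ), hlt, Fin.ext rfl⟩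
    · intro i hi
      rw [Finset.mem_filter]
      refine ⟨Finset.mem_univ _, ?_⟩
      exact dif_neg (by simpa using Nat.not_le.2 hi)
    · intro i j hi hj hij
      simpa [Fin.ext_iff] using hij
  · -- every other color class is a singleton
    rintro (_ | s) hc
    · exact absurd rfl hc
    · rw [Finset.filter_congr_decidable]
      refine Finset.card_eq_one.2 ⟨s.1, ?_⟩
      ext v
      rw [Finset.mem_filter]
      simp only [Finset.mem_univ, true_and, Finset.mem_singleton]
      by_cases h : r ≤ (v : ℕ)
      · simp only [dif_pos h, Option.some.injEq]
        constructor
        · intro hh; rw [← hh]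
        · intro hh; exact Subtype.ext hh
      · simp only [dif_neg h]
        constructor
        · intro hh; cases hh
        · rintro rfl; exact absurd s.2 h
  · -- no colored Tverberg partition exists
    rintro ⟨F, hdis, hcov, hrain, y, hy⟩
    simp only [Set.mem_iInter] at hy
    obtain ⟨i₀, hi₀⟩ : ∃ i, (0 : Fin (N+1)) ∈ F i := by
      have h0 : (0 : Fin (N+1)) ∈ Finset.univ.biUnion F := by
        rw [hcov]; exact Finset.mem_univ _
      simpa using Finset.mem_biUnion.1 h0
    have hnot0 : ∀ i, i ≠ i₀ → ∀ v ∈ F i, (v : ℕ) ≠ 0 := by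
      intro i hne v hv h0
      have hv0 : v = 0 := Fin.ext h0
      subst hv0
      exact (Finset.disjoint_left.1 (hdis hne)) hv hi₀
    have honly : ∀ v ∈ F i₀, (v : ℕ) < r → v = 0 := by
      intro v hv hvr
      apply hrain i₀ (Finset.mem_coe.2 hv) (Finset.mem_coe.2 hi₀)
      have h1 : ¬ r ≤ (v : ℕ) := by omega
      have h2 : ¬ r ≤ ((0 : Fin (N+1)) : ℕ) := by
        rw [Fin.val_zero]; omega
      simp only [dif_neg h1, dif_neg h2]
    -- classification of the generators of each part
    have hgen0 : ∀ v ∈ F i₀, qpt d r (v : ℕ) = WithLp.toLp 2 (fun _ => (2:ℝ)) ∨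
        (r ≤ (v : ℕ) ∧ qpt d r (v : ℕ) =
          WithLp.toLp 2 (fun k : Fin d => if (k : ℕ) = min (((v : ℕ) - r) / (r - 1)) (d - 1) then (1:ℝ) else 0)) := by
      intro v hv
      by_cases h1 : (v : ℕ) < r
      · left
        have := honly v hv h1
        subst this
        simp [qpt]
      · right
        refine ⟨by omega, ?_⟩
        simp only [qpt, if_neg (by omega : ¬ (v:ℕ) = 0), if_neg h1]
    have hgen : ∀ i, i ≠ i₀ → ∀ v ∈ F i, qpt d r (v : ℕ) = WithLp.toLp 2 (fun _ => (-2:ℝ)) ∨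
        (r ≤ (v : ℕ) ∧ qpt d r (v : ℕ) =
          WithLp.toLp 2 (fun k : Fin d => if (k : ℕ) = min (((v : ℕ) - r) / (r - 1)) (d - 1) then (1:ℝ) else 0)) := by
      intro i hne v hv
      by_cases h1 : (v : ℕ) < r
      · left
        simp only [qpt, if_neg (hnot0 i hne v hv), if_pos h1]
      · right
        refine ⟨by omega, ?_⟩
        simp only [qpt, if_neg (by omega : ¬ (v:ℕ) = 0), if_neg h1]
    have hmlt : ∀ v : ℕ, min ((v - r) / (r - 1)) (d - 1) < d := by
      intro v
      have := Nat.min_le_right ((v - r) / (r - 1)) (d - 1)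
      omega
    -- counting: each basis vector class has at most r-1 members
    have hbounds : ∀ (j : Fin d) (v : Fin (N+1)), r ≤ (v : ℕ) →
        min (((v : ℕ) - r) / (r - 1)) (d - 1) = (j : ℕ) →
        (j : ℕ) * (r-1) ≤ (v : ℕ) - r ∧ (v : ℕ) - r < (j : ℕ) * (r-1) + (r-1) := by
      intro j v hvr hjv
      have hql : (j : ℕ) ≤ ((v : ℕ) - r) / (r - 1) := by
        rw [← hjv]; exact Nat.min_le_left _ _
      have hlow : (j : ℕ) * (r-1) ≤ (v : ℕ) - r := by
        have := (Nat.le_div_iff_mul_le hr1).1 hql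
        omega
      refine ⟨hlow, ?_⟩
      rcases le_or_gt (((v : ℕ) - r) / (r - 1)) (d - 1) with h | h
      · have hq : ((v : ℕ) - r) / (r - 1) = (j : ℕ) := by
          rw [← hjv, min_eq_left h]
        have hlt : ((v : ℕ) - r) / (r - 1) < (j : ℕ) + 1 := by omega
        have := (Nat.div_lt_iff_lt_mul hr1).1 hlt
        have hsm : ((j : ℕ) + 1) * (r - 1) = (j : ℕ) * (r-1) + (r-1) := Nat.succ_mul _ _
        omega
      · have hj : (j : ℕ) = d - 1 := by
          rw [← hjv, min_eq_right (le_of_lt h)]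
        have hvN : (v : ℕ) ≤ N := by omega
        have e2 : (d + 1) * (r - 1) = d * (r - 1) + (r - 1) := Nat.succ_mul _ _
        have e1 : (d - 1) * (r - 1) + (r - 1) = d * (r - 1) := by
          have hd1 : d - 1 + 1 = d := by omega
          have hsm : (d - 1 + 1) * (r - 1) = (d - 1) * (r - 1) + 1 * (r - 1) :=
            Nat.add_mul _ _ _
          rw [hd1, one_mul] at hsm
          omega
        rw [hj]
        omega
    have hcard : ∀ j : Fin d,
        (Finset.univ.filter (fun v : Fin (N+1) =>
          r ≤ (v : ℕ) ∧ min (((v : ℕ) - r) / (r - 1)) (d - 1) = (j : ℕ))).card ≤ r - 1 := by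
      intro j
      have hle : (Finset.univ.filter (fun v : Fin (N+1) =>
          r ≤ (v : ℕ) ∧ min (((v : ℕ) - r) / (r - 1)) (d - 1) = (j : ℕ))).card
          ≤ (Finset.range (r-1)).card := by
        refine Finset.card_le_card_of_injOn
          (fun v : Fin (N+1) => (v : ℕ) - r - (j : ℕ) * (r-1)) ?_ ?_
        · intro v hv
          rw [Finset.mem_coe, Finset.mem_filter] at hv
          obtain ⟨h1, h2⟩ := hbounds j v hv.2.1 hv.2.2
          refine Finset.mem_range.2 ?_
          show (v : ℕ) - r - (j : ℕ) * (r-1) < r - 1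
          omega
        · intro v₁ h₁ v₂ h₂ he
          simp only [Finset.coe_filter, Set.mem_setOf_eq] at h₁ h₂
          obtain ⟨a1, b1⟩ := hbounds j v₁ h₁.2.1 h₁.2.2
          obtain ⟨a2, b2⟩ := hbounds j v₂ h₂.2.1 h₂.2.2
          have c1 := h₁.2.1
          have c2 := h₂.2.1
          have he' : (v₁ : ℕ) - r - (j : ℕ) * (r-1) = (v₂ : ℕ) - r - (j : ℕ) * (r-1) := he
          exact Fin.ext (by omega)
      simpa using hle
    have hmiss : ∀ j : Fin d, ∃ i, ∀ v ∈ F i,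
        ¬ (r ≤ (v : ℕ) ∧ min (((v : ℕ) - r) / (r - 1)) (d - 1) = (j : ℕ)) := by
      intro j
      by_contra hcon
      push_neg at hcon
      choose g hg1 hg2 using hcon
      have hginj : Function.Injective g := by
        intro i₁ i₂ he
        by_contra hne
        exact (Finset.disjoint_left.1 (hdis hne)) (hg1 i₁) (he ▸ hg1 i₂)
      have hle : (Finset.univ : Finset (Fin r)).card ≤
          (Finset.univ.filter (fun v : Fin (N+1) =>
            r ≤ (v : ℕ) ∧ min (((v : ℕ) - r) / (r - 1)) (d - 1) = (j : ℕ))).card := by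
        apply Finset.card_le_card_of_injOn g
        · intro i _
          exact Finset.mem_filter.2 ⟨Finset.mem_univ _, hg2 i⟩
        · exact hginj.injOn
      rw [Finset.card_univ, Fintype.card_fin] at hle
      have := hcard j
      omega
    set Jb : Finset (Fin d) := Finset.univ.filter (fun j => ∀ i, i ≠ i₀ → ∃ v ∈ F i,
      r ≤ (v : ℕ) ∧ min (((v : ℕ) - r) / (r - 1)) (d - 1) = (j : ℕ)) with hJb
    have hI0 : ∀ j ∈ Jb, ∀ v ∈ F i₀,
        ¬ (r ≤ (v : ℕ) ∧ min (((v : ℕ) - r) / (r - 1)) (d - 1) = (j : ℕ)) := by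
      intro j hj
      obtain ⟨i, hi⟩ := hmiss j
      rcases eq_or_ne i i₀ with rfl | hne
      · exact hi
      · exfalso
        obtain ⟨v, hvF, hvp⟩ := (Finset.mem_filter.1 hj).2 i hne
        exact hi v hvF hvp
    -- nonnegativity of all coordinates of y
    have hnn : ∀ j : Fin d, 0 ≤ y j := by
      intro j
      refine hullGe (linCoord j) ?_ (hy i₀)
      rintro x ⟨v, hv, rfl⟩
      rcases hgen0 v hv with h | ⟨hvr, h⟩ <;> simp only [h, PiLp.toLp_apply]
      · norm_num
      · split_ifs <;> norm_num
    by_cases hJB : Jb = Finset.univ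
    · -- Case B : every non-i₀ part contains every basis vector; then F i₀ = {index 0}
      have hallA : ∀ v ∈ F i₀, qpt d r (v : ℕ) = WithLp.toLp 2 (fun _ => (2:ℝ)) := by
        intro v hv
        rcases hgen0 v hv with h | ⟨hvr, h⟩
        · exact h
        · exfalso
          exact hI0 ⟨_, hmlt (v : ℕ)⟩ (by rw [hJB]; exact Finset.mem_univ _) v hv ⟨hvr, rfl⟩
      have hsub : (fun v : Fin (N+1) => qpt d r (v : ℕ)) '' ↑(F i₀) ⊆
          {(WithLp.toLp 2 (fun _ => (2:ℝ)) : EuclideanSpace ℝ (Fin d))} := by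
        rintro x ⟨v, hv, rfl⟩
        exact hallA v hv
      have hya : y = WithLp.toLp 2 (fun _ => (2:ℝ)) := by
        have := convexHull_min hsub (convex_singleton _) (hy i₀)
        simpa using this
      obtain ⟨i₁, hi₁⟩ : ∃ i : Fin r, i ≠ i₀ := by
        rcases eq_or_ne i₀ ⟨0, by omega⟩ with h | h
        · exact ⟨⟨1, by omega⟩, by rw [h]; simp [Fin.ext_iff]⟩
        · exact ⟨⟨0, by omega⟩, fun hh => h hh.symm⟩
      have hub : y ⟨0, hd0⟩ ≤ 1 := by
        refine hullLe (linCoord ⟨0, hd0⟩) ?_ (hy i₁)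
        rintro x ⟨v, hv, rfl⟩
        rcases hgen i₁ hi₁ v hv with h | ⟨hvr, h⟩ <;> simp only [h, PiLp.toLp_apply]
        · norm_num
        · split_ifs <;> norm_num
      rw [hya] at hub
      norm_num [PiLp.toLp_apply] at hub
    · -- Case A : some basis vector is missed by a part other than i₀
      obtain ⟨j₀, hj₀⟩ : ∃ j : Fin d, j ∉ Jb := by
        by_contra h
        push_neg at h
        exact hJB (Finset.eq_univ_iff_forall.2 h)
      have hmiss' : ∀ j : Fin d, j ∉ Jb → ∃ i, i ≠ i₀ ∧ ∀ v ∈ F i,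
          r ≤ (v : ℕ) → min (((v : ℕ) - r) / (r - 1)) (d - 1) ≠ (j : ℕ) := by
        intro j hj
        rw [hJb, Finset.mem_filter] at hj
        push_neg at hj
        exact hj (Finset.mem_univ j)
      have hzero : ∀ j : Fin d, j ∉ Jb → y j = 0 := by
        intro j hj
        obtain ⟨i, hne, hmi⟩ := hmiss' j hj
        have hle : y j ≤ 0 := by
          refine hullLe (linCoord j) ?_ (hy i)
          rintro x ⟨v, hv, rfl⟩
          rcases hgen i hne v hv with h | ⟨hvr, h⟩ <;> simp only [h, PiLp.toLp_apply]
          · norm_num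
          · rw [if_neg (show ¬ ((j : ℕ) = min (((v : ℕ) - r) / (r - 1)) (d - 1)) from
              fun hh => hmi v hv hvr hh.symm)]
        linarith [hnn j]
      obtain ⟨Q, hQne, hQM⟩ := hmiss' j₀ hj₀
      have hTle : (∑ k, y k) ≤ 1 := by
        refine hullLe linSum ?_ (hy Q)
        rintro x ⟨v, hv, rfl⟩
        rcases hgen Q hQne v hv with h | ⟨hvr, h⟩ <;> simp only [h, PiLp.toLp_apply]
        · rw [Finset.sum_const, Finset.card_univ, Fintype.card_fin, nsmul_eq_mul]
          have : (0:ℝ) ≤ (d:ℝ) := Nat.cast_nonneg d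
          nlinarith
        · rw [sum_ite_val Finset.univ _ (hmlt (v : ℕ)), if_pos (Finset.mem_univ _)]
      have hTge : 1 ≤ (∑ k, y k) - (2*(d:ℝ)+1) * y j₀ := by
        refine hullGe (linSub j₀ (2*(d:ℝ)+1)) ?_ (hy Q)
        rintro x ⟨v, hv, rfl⟩
        rcases hgen Q hQne v hv with h | ⟨hvr, h⟩ <;> simp only [h, PiLp.toLp_apply]
        · rw [Finset.sum_const, Finset.card_univ, Fintype.card_fin, nsmul_eq_mul]
          have : (0:ℝ) ≤ (d:ℝ) := Nat.cast_nonneg d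
          nlinarith
        · rw [sum_ite_val Finset.univ _ (hmlt (v : ℕ)), if_pos (Finset.mem_univ _), if_neg]
          · norm_num
          · intro hh
            exact hQM v hv hvr hh.symm
      have hj₀0 : y j₀ = 0 := hzero j₀ hj₀
      have hT : (∑ k, y k) = 1 := by
        rw [hj₀0] at hTge
        simp only [mul_zero, sub_zero] at hTge
        linarith
      have hpsi : (d:ℝ) * (∑ j ∈ Jb, y j) - (Jb.card : ℝ) * (∑ k, y k) ≤ 0 := by
        refine hullLe (linBad Jb (d:ℝ) (Jb.card : ℝ)) ?_ (hy i₀)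
        rintro x ⟨v, hv, rfl⟩
        rcases hgen0 v hv with h | ⟨hvr, h⟩ <;> simp only [h, PiLp.toLp_apply]
        · rw [Finset.sum_const, Finset.sum_const, Finset.card_univ, Fintype.card_fin,
            nsmul_eq_mul, nsmul_eq_mul]
          ring_nf
          norm_num
        · have hnotin : (⟨_, hmlt (v : ℕ)⟩ : Fin d) ∉ Jb := by
            intro hin
            exact hI0 _ hin v hv ⟨hvr, rfl⟩
          rw [sum_ite_val Jb _ (hmlt (v : ℕ)), sum_ite_val Finset.univ _ (hmlt (v : ℕ)),
            if_neg hnotin, if_pos (Finset.mem_univ _)]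
          have : (0:ℝ) ≤ (Jb.card : ℝ) := Nat.cast_nonneg _
          nlinarith
      have hsplit : ∑ j ∈ Jb, y j = ∑ k, y k := by
        refine Finset.sum_subset (Finset.subset_univ Jb) ?_
        intro j _ hj
        exact hzero j hj
      rw [hsplit, hT, mul_one, mul_one] at hpsi
      have hdc : d ≤ Jb.card := by
        have : (d:ℝ) ≤ (Jb.card : ℝ) := by linarith
        exact_mod_cast this
      have hcu : Jb.card ≤ d := by
        simpa using Finset.card_le_univ Jb
      exact hJB (Finset.eq_univ_of_card _ (by rw [Fintype.card_fin]; omega))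
end
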